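/- Suppose a substitution (σ, A, a) projects onto a substitution (τ, B, b) via a letter-to-letter morphism φ, and suppose every letter of B occurs in the fixed point y of τ. Then the dominant eigenvalues of the incidence matrices M_σ and M_τ are equal. -/

import Mathlib

/-- Apply a substitution (given on letters) to a word. -/
def Subst.apply {A : Type*} (σ : A → List A) (w : List A) : List A := (w.map σ).flatten

/-- `x` is the fixed point of the substitution `σ` starting at the letter `a`. -/
def IsFixedPointSeq {A : Type*} (σ : A → List A) (a : A) (x : ℕ → A) : Prop :=
  (∀ N : ℕ, ∃ n : ℕ, N ≤ ((Subst.apply σ)^[n] [a]).length) ∧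
  ∀ (n i : ℕ) (h : i < ((Subst.apply σ)^[n] [a]).length),
    ((Subst.apply σ)^[n] [a]).get ⟨i, h⟩ = x i

/-- Incidence matrix of a substitution: entry `(i, j)` counts occurrences of `i` in `σ j`. -/
noncomputable def IncMat {A : Type*} [Fintype A] [DecidableEq A] (σ : A → List A) :
    Matrix A A ℝ := Matrix.of fun i j => ((σ j).count i : ℝ)

/-- `α` is the dominant (Perron) eigenvalue of the real matrix `M`. -/
def IsDomEig {n : Type*} [Fintype n] [DecidableEq n] (M : Matrix n n ℝ) (α : ℝ) : Prop :=
  Module.End.HasEigenvalue (Matrix.toLin' M) α ∧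
  ∀ μ : ℂ, Module.End.HasEigenvalue (Matrix.toLin' (M.map Complex.ofReal)) μ →
    ‖μ‖ ≤ α

open Matrix Module.End Filter

attribute [local instance] Matrix.linftyOpNormedRing Matrix.linftyOpNormedAlgebra

@[local instance] noncomputable def StmtAux.matCompl {n : Type*} [Fintype n] [DecidableEq n] :
    CompleteSpace (Matrix n n ℂ) :=
  (by infer_instance : CompleteSpace (n → n → ℂ))

namespace StmtAux

variable {A : Type*} [Fintype A] [DecidableEq A]

lemma count_subst (σ : A → List A) (w : List A) (i : A) :
    (Subst.apply σ w).count i = ∑ j, w.count j * (σ j).count i := by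
  induction w with
  | nil => simp [Subst.apply]
  | cons c w ih =>
    have h : Subst.apply σ (c :: w) = σ c ++ Subst.apply σ w := rfl
    rw [h, List.count_append, ih]
    simp only [List.count_cons, add_mul, Finset.sum_add_distrib]
    rw [add_comm]
    congr 1
    simp [beq_iff_eq, ite_mul]

lemma sum_count (l : List A) : ∑ i : A, l.count i = l.length := by
  induction l with
  | nil => simp
  | cons c l ih => simp [List.count_cons, Finset.sum_add_distrib, ih, add_comm]

lemma incMat_pow (σ : A → List A) (n : ℕ) :
    (IncMat σ) ^ n = Matrix.of fun i c => ((((Subst.apply σ)^[n]) [c]).count i : ℝ) := by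
  induction n with
  | zero =>
    ext i c
    simp only [pow_zero, Function.iterate_zero, id_eq, Matrix.of_apply]
    rw [Matrix.one_apply]
    rcases eq_or_ne i c with h | h <;> simp [h, List.count_singleton, eq_comm]
  | succ n ih =>
    ext i c
    rw [pow_succ', ih, Matrix.mul_apply]
    simp only [Matrix.of_apply, IncMat]
    rw [Function.iterate_succ_apply']
    rw [count_subst]
    push_cast
    exact Finset.sum_congr rfl fun j _ => by ring

section Spec

variable {n : Type*} [Fintype n] [DecidableEq n]

lemma mem_spectrum_iff_eig (M : Matrix n n ℂ) (μ : ℂ) :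
    μ ∈ spectrum ℂ M ↔ HasEigenvalue (Matrix.toLin' M) μ := by
  rw [← AlgEquiv.spectrum_eq (Matrix.toLinAlgEquiv' : Matrix n n ℂ ≃ₐ[ℂ] _) M,
    ← Module.End.hasEigenvalue_iff_mem_spectrum]
  rfl

lemma spectrum_transpose (M : Matrix n n ℂ) : spectrum ℂ Mᵀ = spectrum ℂ M := by
  ext μ
  rw [spectrum.mem_iff, spectrum.mem_iff]
  have h : algebraMap ℂ (Matrix n n ℂ) μ - Mᵀ = (algebraMap ℂ (Matrix n n ℂ) μ - M)ᵀ := by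
    simp only [Algebra.algebraMap_eq_smul_one, Matrix.transpose_sub, Matrix.transpose_smul,
      Matrix.transpose_one]
  rw [h]
  have h2 : ∀ X : Matrix n n ℂ, IsUnit Xᵀ ↔ IsUnit X := by
    intro X
    rw [Matrix.isUnit_iff_isUnit_det, Matrix.det_transpose, ← Matrix.isUnit_iff_isUnit_det]
  rw [h2]

lemma complexify_eig (M : Matrix n n ℝ) (μ : ℝ) (h : HasEigenvalue (Matrix.toLin' M) μ) :
    HasEigenvalue (Matrix.toLin' (M.map Complex.ofReal)) (μ : ℂ) := by
  obtain ⟨v, hv1, hv2⟩ := h.exists_hasEigenvector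
  have hmv : M.mulVec v = μ • v := by
    have := mem_eigenspace_iff.mp hv1
    rwa [Matrix.toLin'_apply] at this
  refine hasEigenvalue_of_hasEigenvector (x := fun i => (v i : ℂ)) ⟨mem_eigenspace_iff.mpr ?_, ?_⟩
  · rw [Matrix.toLin'_apply]
    funext i
    have h1 : ((M.map Complex.ofReal).mulVec fun i => (v i : ℂ)) i
        = ((M.mulVec v i : ℝ) : ℂ) := by
      simp [Matrix.mulVec, dotProduct]
    rw [h1, hmv]
    simp
  · intro hc
    apply hv2
    funext i
    have := congrFun hc i
    simpa using this

lemma domEig_nonneg (M : Matrix n n ℝ) (α : ℝ) (h : IsDomEig M α) : 0 ≤ α := by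
  have h1 := h.2 α (complexify_eig _ _ h.1)
  rw [Complex.norm_real, Real.norm_eq_abs] at h1
  exact le_trans (abs_nonneg α) h1

lemma specRad_eq (M : Matrix n n ℝ) (α : ℝ) (h : IsDomEig M α) :
    spectralRadius ℂ ((M.map Complex.ofReal)ᵀ) = ENNReal.ofReal α := by
  have hα0 : 0 ≤ α := domEig_nonneg M α h
  rw [spectralRadius]
  apply le_antisymm
  · refine iSup₂_le fun μ hμ => ?_
    rw [spectrum_transpose, mem_spectrum_iff_eig] at hμ
    have := h.2 μ hμ
    rw [← enorm_eq_nnnorm, ← ofReal_norm]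
    exact ENNReal.ofReal_le_ofReal this
  · have hmem : (α : ℂ) ∈ spectrum ℂ ((M.map Complex.ofReal)ᵀ) := by
      rw [spectrum_transpose, mem_spectrum_iff_eig]
      exact complexify_eig _ _ h.1
    refine le_iSup₂_of_le (α : ℂ) hmem ?_
    rw [← enorm_eq_nnnorm, ← ofReal_norm, Complex.norm_real, Real.norm_eq_abs, abs_of_nonneg hα0]

lemma nnnorm_pow_eq (σ : A → List A) (m : ℕ) :
    ‖(((IncMat σ).map Complex.ofReal)ᵀ) ^ m‖₊
      = (Finset.univ : Finset A).sup fun c => ((((Subst.apply σ)^[m]) [c]).length : NNReal) := by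
  have hmp : ∀ (k : ℕ), ((IncMat σ).map Complex.ofReal) ^ k = ((IncMat σ) ^ k).map Complex.ofReal := by
    intro k
    induction k with
    | zero => simp [Matrix.map_one Complex.ofReal Complex.ofReal_zero Complex.ofReal_one]
    | succ k ih =>
      ext i j
      rw [pow_succ, pow_succ, ih]
      simp only [Matrix.mul_apply, Matrix.map_apply]
      push_cast
      rfl
  have h1 : (((IncMat σ).map Complex.ofReal)ᵀ) ^ m = (((IncMat σ) ^ m).map Complex.ofReal)ᵀ := by
    rw [← Matrix.transpose_pow, hmp]
  rw [h1, Matrix.linfty_opNNNorm_def]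
  refine Finset.sup_congr rfl fun c _ => ?_
  have h3 : (∑ i : A, ‖(((IncMat σ ^ m).map Complex.ofReal)ᵀ) c i‖₊)
      = ∑ i : A, ((((Subst.apply σ)^[m]) [c]).count i : NNReal) := by
    refine Finset.sum_congr rfl fun i _ => ?_
    rw [incMat_pow]
    simp [Matrix.transpose_apply]
  rw [h3, ← Nat.cast_sum, sum_count]

end Spec

end StmtAux

theorem stmt6 {A B : Type*} [Fintype A] [DecidableEq A] [Fintype B] [DecidableEq B]
    (σ : A → List A) (τ : B → List B) (a : A) (b : B) (φ : A → B)
    (hσa : ∃ u : List A, σ a = a :: u) (hτb : ∃ u : List B, τ b = b :: u)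
    (hφa : φ a = b) (hcomm : ∀ c : A, List.map φ (σ c) = τ (φ c))
    (y : ℕ → B) (hy : IsFixedPointSeq τ b y)
    (hyfull : ∀ d : B, ∃ i : ℕ, y i = d)
    (α β : ℝ) (hα : IsDomEig (IncMat σ) α) (hβ : IsDomEig (IncMat τ) β) :
    α = β := by
  classical
  haveI : Nonempty A := ⟨a⟩
  haveI : Nonempty B := ⟨b⟩
  -- φ maps words compatibly
  have hmap : ∀ w : List A, List.map φ (Subst.apply σ w) = Subst.apply τ (List.map φ w) := by
    intro w
    induction w with
    | nil => rfl
    | cons c w ih =>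
      have h1 : Subst.apply σ (c :: w) = σ c ++ Subst.apply σ w := rfl
      have h2 : Subst.apply τ (φ c :: List.map φ w) = τ (φ c) ++ Subst.apply τ (List.map φ w) :=
        rfl
      rw [h1, List.map_append, ih, List.map_cons, h2, hcomm]
  have hiter : ∀ (m : ℕ) (c : A),
      List.map φ ((Subst.apply σ)^[m] [c]) = (Subst.apply τ)^[m] [φ c] := by
    intro m
    induction m with
    | zero => intro c; rfl
    | succ m ih =>
      intro c
      rw [Function.iterate_succ_apply', Function.iterate_succ_apply', hmap, ih]
  have hlen : ∀ (m : ℕ) (c : A),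
      ((Subst.apply σ)^[m] [c]).length = ((Subst.apply τ)^[m] [φ c]).length := by
    intro m c
    rw [← hiter, List.length_map]
  -- φ is surjective
  have hsurj : ∀ d : B, ∃ c : A, φ c = d := by
    intro d
    obtain ⟨i, hi⟩ := hyfull d
    obtain ⟨m, hm⟩ := hy.1 (i + 1)
    have hilt : i < ((Subst.apply τ)^[m] [b]).length := hm
    have hd : ((Subst.apply τ)^[m] [b]).get ⟨i, hilt⟩ = d := by rw [hy.2 m i hilt, hi]
    have hba : (Subst.apply τ)^[m] [b] = List.map φ ((Subst.apply σ)^[m] [a]) := by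
      rw [hiter, hφa]
    have hilt2 : i < ((Subst.apply σ)^[m] [a]).length := by
      rw [← List.length_map φ, ← hba]; exact hilt
    refine ⟨((Subst.apply σ)^[m] [a]).get ⟨i, hilt2⟩, ?_⟩
    rw [← hd]
    simp only [List.get_eq_getElem, hba, List.getElem_map]
  -- nonnegativity
  have hα0 : 0 ≤ α := StmtAux.domEig_nonneg _ _ hα
  have hβ0 : 0 ≤ β := StmtAux.domEig_nonneg _ _ hβ
  -- equal norms of powers
  have hnorm : ∀ m : ℕ, ‖(((IncMat σ).map Complex.ofReal)ᵀ) ^ m‖₊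
      = ‖(((IncMat τ).map Complex.ofReal)ᵀ) ^ m‖₊ := by
    intro m
    rw [StmtAux.nnnorm_pow_eq, StmtAux.nnnorm_pow_eq]
    apply le_antisymm
    · refine Finset.sup_le fun c _ => ?_
      rw [hlen]
      exact Finset.le_sup (f := fun d => ((((Subst.apply τ)^[m]) [d]).length : NNReal))
        (Finset.mem_univ (φ c))
    · refine Finset.sup_le fun d _ => ?_
      obtain ⟨c, hc⟩ := hsurj d
      rw [← hc, ← hlen]
      exact Finset.le_sup (f := fun c => ((((Subst.apply σ)^[m]) [c]).length : NNReal))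
        (Finset.mem_univ c)
  -- Gelfand's formula on both sides
  have gσ := spectrum.pow_nnnorm_pow_one_div_tendsto_nhds_spectralRadius
    (((IncMat σ).map Complex.ofReal)ᵀ)
  have gτ := spectrum.pow_nnnorm_pow_one_div_tendsto_nhds_spectralRadius
    (((IncMat τ).map Complex.ofReal)ᵀ)
  have hfun : (fun m : ℕ => (‖(((IncMat σ).map Complex.ofReal)ᵀ) ^ m‖₊ : ENNReal) ^ (1 / m : ℝ))
      = fun m : ℕ => (‖(((IncMat τ).map Complex.ofReal)ᵀ) ^ m‖₊ : ENNReal) ^ (1 / m : ℝ) := by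
    funext m; rw [hnorm]
  rw [hfun] at gσ
  have heq := tendsto_nhds_unique gσ gτ
  rw [StmtAux.specRad_eq _ _ hα, StmtAux.specRad_eq _ _ hβ] at heq
  exact (ENNReal.ofReal_eq_ofReal_iff hα0 hβ0).mp heq
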